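/- Weak compositionality, backward direction: for nets N : k→l and M : l→m, if N has a weak transition X ==α/γ==> X' and M has a weak transition Y ==γ/β==> Y' for some γ ∈ {0,1}^l, then the composite N;M has a weak transition (X ⊎ Y) ==α/β==> (X' ⊎ Y'). -/

import Mathlib

/-- A net with boundaries `N : k → l` with places `P` and transitions `T`. -/
structure Net (P : Type) (T : Type) (k l : ℕ) where
  pre : T → Set P
  post : T → Set P
  src : T → Set (Fin k)
  tgt : T → Set (Fin l)

namespace Net

variable {P Q R : Type} {T₁ T₂ T₃ : Type} {k l m n : ℕ}

/-- Distinct transitions have disjoint boundary connections. -/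
def BoundaryInj (N : Net P T₁ k l) : Prop :=
  ∀ t t' : T₁, t ≠ t' → N.src t ∩ N.src t' = ∅ ∧ N.tgt t ∩ N.tgt t' = ∅

def preSet (N : Net P T₁ k l) (U : Set T₁) : Set P := ⋃ t ∈ U, N.pre t
def postSet (N : Net P T₁ k l) (U : Set T₁) : Set P := ⋃ t ∈ U, N.post t
def srcSet (N : Net P T₁ k l) (U : Set T₁) : Set (Fin k) := ⋃ t ∈ U, N.src t
def tgtSet (N : Net P T₁ k l) (U : Set T₁) : Set (Fin l) := ⋃ t ∈ U, N.tgt t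

/-- Mutual independence of a set of transitions. -/
def MI (N : Net P T₁ k l) (U : Set T₁) : Prop :=
  ∀ t ∈ U, ∀ t' ∈ U, t ≠ t' →
    (N.pre t ∪ N.post t) ∩ (N.pre t' ∪ N.post t') = ∅

/-- The (1-bounded) step transition relation on markings. -/
def Step (N : Net P T₁ k l) (X : Set P) (α : Set (Fin k)) (β : Set (Fin l))
    (X' : Set P) : Prop :=
  ∃ U : Set T₁, N.MI U ∧ N.preSet U ⊆ X ∧ N.postSet U ∩ X = ∅ ∧
    X' = (X \ N.preSet U) ∪ N.postSet U ∧ N.srcSet U = α ∧ N.tgtSet U = β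

/-- A synchronisation between `N : k → l` and `M : l → m`. -/
def Sync (N : Net P T₁ k l) (M : Net Q T₂ l m) (U : Set T₁) (V : Set T₂) : Prop :=
  N.MI U ∧ M.MI V ∧ N.tgtSet U = M.srcSet V

/-- A minimal synchronisation: non-trivial, and any synchronisation below it is
trivial (or the synchronisation itself). -/
def MinSync (N : Net P T₁ k l) (M : Net Q T₂ l m) (U : Set T₁) (V : Set T₂) : Prop :=
  Sync N M U V ∧ ¬(U = ∅ ∧ V = ∅) ∧
    ∀ U' V', U' ⊆ U → V' ⊆ V → Sync N M U' V' →
      (U' = ∅ ∧ V' = ∅) ∨ (U' = U ∧ V' = V)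

/-- Independence of two synchronisations: unions componentwise MI, and disjoint. -/
def IndepSync (N : Net P T₁ k l) (M : Net Q T₂ l m)
    (s s' : Set T₁ × Set T₂) : Prop :=
  N.MI (s.1 ∪ s'.1) ∧ M.MI (s.2 ∪ s'.2) ∧ s.1 ∩ s'.1 = ∅ ∧ s.2 ∩ s'.2 = ∅

/-- Composition `N ; M` of nets along a common boundary. -/
def comp (N : Net P T₁ k l) (M : Net Q T₂ l m) :
    Net (P ⊕ Q) {s : Set T₁ × Set T₂ // MinSync N M s.1 s.2} k m where
  pre s := Sum.inl '' N.preSet s.1.1 ∪ Sum.inr '' M.preSet s.1.2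
  post s := Sum.inl '' N.postSet s.1.1 ∪ Sum.inr '' M.postSet s.1.2
  src s := N.srcSet s.1.1
  tgt s := M.tgtSet s.1.2

/-- Tensor (parallel composition) of nets. -/
def tensor (M : Net P T₁ k l) (N : Net Q T₂ m n) :
    Net (P ⊕ Q) (T₁ ⊕ T₂) (k + m) (l + n) where
  pre := Sum.elim (fun t => Sum.inl '' M.pre t) (fun t => Sum.inr '' N.pre t)
  post := Sum.elim (fun t => Sum.inl '' M.post t) (fun t => Sum.inr '' N.post t)
  src := Sum.elim (fun t => Fin.castAdd m '' M.src t) (fun t => Fin.natAdd k '' N.src t)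
  tgt := Sum.elim (fun t => Fin.castAdd n '' M.tgt t) (fun t => Fin.natAdd l '' N.tgt t)

/-- Disjoint union of markings. -/
def mU (X : Set P) (Y : Set Q) : Set (P ⊕ Q) := Sum.inl '' X ∪ Sum.inr '' Y

/-- Traces: sequences of consecutive step transitions, recorded by their labels. -/
def Trace (N : Net P T₁ k l) :
    Set P → List (Set (Fin k) × Set (Fin l)) → Set P → Prop
  | X, [], X' => X = X'
  | X, ab :: w, X' => ∃ X'', N.Step X ab.1 ab.2 X'' ∧ N.Trace X'' w X'

/-- Epsilon (internal) steps. -/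
def EpsStep (N : Net P T₁ k l) (X X' : Set P) : Prop := N.Step X ∅ ∅ X'

/-- The weak transition relation. -/
def Weak (N : Net P T₁ k l) (X : Set P) (α : Set (Fin k)) (β : Set (Fin l))
    (X' : Set P) : Prop :=
  ∃ X'' X''', Relation.ReflTransGen N.EpsStep X X'' ∧ N.Step X'' α β X''' ∧
    Relation.ReflTransGen N.EpsStep X''' X'

end Net

/-- An NFA with boundaries `A : k → l`: alphabet `{0,1}^k × {0,1}^l`. -/
structure BNFA (S : Type) (k l : ℕ) where
  step : S → Set (Fin k) × Set (Fin l) → S → Prop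
  start : Set S
  accept : Set S

namespace BNFA

variable {S S' S'' : Type} {k l m n : ℕ}

def Run (A : BNFA S k l) : S → List (Set (Fin k) × Set (Fin l)) → S → Prop
  | s, [], s' => s = s'
  | s, a :: w, s' => ∃ s₁, A.step s a s₁ ∧ A.Run s₁ w s'

def Lang (A : BNFA S k l) : Set (List (Set (Fin k) × Set (Fin l))) :=
  {w | ∃ s ∈ A.start, ∃ s' ∈ A.accept, A.Run s w s'}

/-- Sequential composition of NFAs with boundaries (synchronising product). -/
def comp (A : BNFA S k l) (B : BNFA S' l m) : BNFA (S × S') k m where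
  step p a q := ∃ γ, A.step p.1 (a.1, γ) q.1 ∧ B.step p.2 (γ, a.2) q.2
  start := {p | p.1 ∈ A.start ∧ p.2 ∈ B.start}
  accept := {p | p.1 ∈ A.accept ∧ p.2 ∈ B.accept}

/-- Tensor of NFAs with boundaries. -/
def tensor (A : BNFA S k l) (B : BNFA S' m n) : BNFA (S × S') (k + m) (l + n) where
  step p a q :=
    A.step p.1 (Fin.castAdd m ⁻¹' a.1, Fin.castAdd n ⁻¹' a.2) q.1 ∧
    B.step p.2 (Fin.natAdd k ⁻¹' a.1, Fin.natAdd l ⁻¹' a.2) q.2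
  start := {p | p.1 ∈ A.start ∧ p.2 ∈ B.start}
  accept := {p | p.1 ∈ A.accept ∧ p.2 ∈ B.accept}

/-- Isomorphism of NFAs with boundaries. -/
def Iso (A : BNFA S k l) (B : BNFA S' k l) : Prop :=
  ∃ e : S ≃ S', (∀ s a s', A.step s a s' ↔ B.step (e s) a (e s')) ∧
    (∀ s, s ∈ A.start ↔ e s ∈ B.start) ∧ (∀ s, s ∈ A.accept ↔ e s ∈ B.accept)

/-- Epsilon transitions of an NFA with boundaries. -/
def EpsA (A : BNFA S k l) (s s' : S) : Prop := A.step s (∅, ∅) s'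

/-- Epsilon closure of an NFA with boundaries. -/
def epsClose (A : BNFA S k l) : BNFA S k l where
  step s a s' := ∃ s₁ s₂, Relation.ReflTransGen A.EpsA s s₁ ∧ A.step s₁ a s₂ ∧
    Relation.ReflTransGen A.EpsA s₂ s'
  start := A.start
  accept := A.accept

end BNFA

/-- The step-semantics NFA of a net with boundaries, with given initial and
final sets of markings. -/
def netNFA {P T : Type} {k l : ℕ} (N : Net P T k l)
    (I F : Set (Set P)) : BNFA (Set P) k l where
  step X a X' := N.Step X a.1 a.2 X'
  start := I
  accept := F

/-- A bundled NFA with boundaries. -/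
structure BBNFA (k l : ℕ) where
  S : Type
  nfa : BNFA S k l

namespace Net

section Aux

variable {P Q : Type} {T₁ T₂ : Type} {k l m : ℕ}

lemma mem_preSet' {N : Net P T₁ k l} {A : Set T₁} {p : P} :
    p ∈ N.preSet A ↔ ∃ t ∈ A, p ∈ N.pre t := by simp [preSet]

lemma mem_postSet' {N : Net P T₁ k l} {A : Set T₁} {p : P} :
    p ∈ N.postSet A ↔ ∃ t ∈ A, p ∈ N.post t := by simp [postSet]

lemma mem_srcSet' {N : Net P T₁ k l} {A : Set T₁} {p : Fin k} :
    p ∈ N.srcSet A ↔ ∃ t ∈ A, p ∈ N.src t := by simp [srcSet]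

lemma mem_tgtSet' {N : Net P T₁ k l} {A : Set T₁} {p : Fin l} :
    p ∈ N.tgtSet A ↔ ∃ t ∈ A, p ∈ N.tgt t := by simp [tgtSet]

lemma MI_mono {N : Net P T₁ k l} {U U' : Set T₁} (h : U' ⊆ U) (hMI : N.MI U) : N.MI U' :=
  fun t ht t' ht' hne => hMI t (h ht) t' (h ht') hne

lemma idle (N : Net P T₁ k l) (X : Set P) : N.Step X ∅ ∅ X :=
  ⟨∅, by simp [MI], by simp [preSet], by simp [postSet],
    by simp [preSet, postSet], by simp [srcSet], by simp [tgtSet]⟩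

/-- Edge relation of the synchronisation graph between transitions of `U` and `V`. -/
def syncEdge (N : Net P T₁ k l) (M : Net Q T₂ l m) (U : Set T₁) (V : Set T₂)
    (a b : T₁ ⊕ T₂) : Prop :=
  (∃ t v, a = Sum.inl t ∧ b = Sum.inr v ∧ t ∈ U ∧ v ∈ V ∧ (N.tgt t ∩ M.src v).Nonempty) ∨
  (∃ t v, a = Sum.inr v ∧ b = Sum.inl t ∧ t ∈ U ∧ v ∈ V ∧ (N.tgt t ∩ M.src v).Nonempty)

def sReach (N : Net P T₁ k l) (M : Net Q T₂ l m) (U : Set T₁) (V : Set T₂) :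
    (T₁ ⊕ T₂) → (T₁ ⊕ T₂) → Prop :=
  Relation.ReflTransGen (syncEdge N M U V)

def sUc (N : Net P T₁ k l) (M : Net Q T₂ l m) (U : Set T₁) (V : Set T₂)
    (x : T₁ ⊕ T₂) : Set T₁ :=
  {t | t ∈ U ∧ sReach N M U V x (Sum.inl t)}

def sVc (N : Net P T₁ k l) (M : Net Q T₂ l m) (U : Set T₁) (V : Set T₂)
    (x : T₁ ⊕ T₂) : Set T₂ :=
  {v | v ∈ V ∧ sReach N M U V x (Sum.inr v)}

lemma syncEdge_symm (N : Net P T₁ k l) (M : Net Q T₂ l m) (U : Set T₁) (V : Set T₂) :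
    Symmetric (syncEdge N M U V) := by
  rintro a b (⟨t, v, rfl, rfl, h⟩ | ⟨t, v, rfl, rfl, h⟩)
  · exact Or.inr ⟨t, v, rfl, rfl, h⟩
  · exact Or.inl ⟨t, v, rfl, rfl, h⟩

lemma sReach_symm (N : Net P T₁ k l) (M : Net Q T₂ l m) (U : Set T₁) (V : Set T₂) :
    Symmetric (sReach N M U V) :=
  by
    haveI : Std.Symm (syncEdge N M U V) := ⟨syncEdge_symm N M U V⟩
    intro a b h
    exact Relation.ReflTransGen.symmetric.symm a b h

lemma sComp_eq (N : Net P T₁ k l) (M : Net Q T₂ l m) {U : Set T₁} {V : Set T₂}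
    {x y : T₁ ⊕ T₂} (h : sReach N M U V x y) :
    sUc N M U V x = sUc N M U V y ∧ sVc N M U V x = sVc N M U V y := by
  have hmove : ∀ x y : T₁ ⊕ T₂, sReach N M U V x y →
      sUc N M U V y ⊆ sUc N M U V x ∧ sVc N M U V y ⊆ sVc N M U V x := by
    intro x y h
    exact ⟨fun t ht => ⟨ht.1, h.trans ht.2⟩, fun v hv => ⟨hv.1, h.trans hv.2⟩⟩
  exact ⟨subset_antisymm (hmove y x (sReach_symm N M U V h)).1 (hmove x y h).1,
    subset_antisymm (hmove y x (sReach_symm N M U V h)).2 (hmove x y h).2⟩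

/-- The boundary of a component matches up. -/
lemma sComp_bd (N : Net P T₁ k l) (M : Net Q T₂ l m) {U : Set T₁} {V : Set T₂}
    (hmid : N.tgtSet U = M.srcSet V) (x : T₁ ⊕ T₂) :
    N.tgtSet (sUc N M U V x) = M.srcSet (sVc N M U V x) := by
  ext p
  rw [mem_tgtSet', mem_srcSet']
  constructor
  · rintro ⟨t, ⟨htU, hrt⟩, hp⟩
    have hpγ : p ∈ M.srcSet V := by rw [← hmid]; exact mem_tgtSet'.2 ⟨t, htU, hp⟩
    obtain ⟨v, hvV, hpv⟩ := mem_srcSet'.1 hpγ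
    exact ⟨v, ⟨hvV, hrt.tail (Or.inl ⟨t, v, rfl, rfl, htU, hvV, ⟨p, hp, hpv⟩⟩)⟩, hpv⟩
  · rintro ⟨v, ⟨hvV, hrv⟩, hp⟩
    have hpγ : p ∈ N.tgtSet U := by rw [hmid]; exact mem_srcSet'.2 ⟨v, hvV, hp⟩
    obtain ⟨t, htU, hpt⟩ := mem_tgtSet'.1 hpγ
    exact ⟨t, ⟨htU, hrv.tail (Or.inr ⟨t, v, rfl, rfl, htU, hvV, ⟨p, hpt, hp⟩⟩)⟩, hpt⟩

/-- A sub-synchronisation is closed under the edge relation. -/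
lemma sync_edge_closed (N : Net P T₁ k l) (M : Net Q T₂ l m)
    (hN : N.BoundaryInj) (hM : M.BoundaryInj) {U : Set T₁} {V : Set T₂}
    {U' : Set T₁} {V' : Set T₂} (hsync : N.tgtSet U' = M.srcSet V')
    {a b : T₁ ⊕ T₂} (e : syncEdge N M U V a b)
    (ha : Sum.elim (· ∈ U') (· ∈ V') a) : Sum.elim (· ∈ U') (· ∈ V') b := by
  rcases e with ⟨t, v, rfl, rfl, htU, hvV, p, hpt, hpv⟩ |
      ⟨t, v, rfl, rfl, htU, hvV, p, hpt, hpv⟩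
  · simp only [Sum.elim_inl] at ha
    simp only [Sum.elim_inr]
    have hp' : p ∈ M.srcSet V' := by rw [← hsync]; exact mem_tgtSet'.2 ⟨t, ha, hpt⟩
    obtain ⟨v', hv', hpv'⟩ := mem_srcSet'.1 hp'
    by_cases hvv : v' = v
    · exact hvv ▸ hv'
    · exact absurd ((hM v' v hvv).1 ▸ (Set.mem_inter hpv' hpv)) (Set.notMem_empty _)
  · simp only [Sum.elim_inr] at ha
    simp only [Sum.elim_inl]
    have hp' : p ∈ N.tgtSet U' := by rw [hsync]; exact mem_srcSet'.2 ⟨v, ha, hpv⟩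
    obtain ⟨t', ht', hpt'⟩ := mem_tgtSet'.1 hp'
    by_cases htt : t' = t
    · exact htt ▸ ht'
    · exact absurd ((hN t' t htt).2 ▸ (Set.mem_inter hpt' hpt)) (Set.notMem_empty _)

/-- Each component of the synchronisation graph is a minimal synchronisation. -/
lemma sComp_minSync (N : Net P T₁ k l) (M : Net Q T₂ l m)
    (hN : N.BoundaryInj) (hM : M.BoundaryInj) {U : Set T₁} {V : Set T₂}
    (hUMI : N.MI U) (hVMI : M.MI V) (hmid : N.tgtSet U = M.srcSet V)
    (x : T₁ ⊕ T₂) (hx : x ∈ (Sum.inl '' U ∪ Sum.inr '' V : Set (T₁ ⊕ T₂))) :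
    MinSync N M (sUc N M U V x) (sVc N M U V x) := by
  refine ⟨⟨MI_mono (fun t ht => ht.1) hUMI, MI_mono (fun v hv => hv.1) hVMI,
    sComp_bd N M hmid x⟩, ?_, ?_⟩
  · rintro ⟨hU0, hV0⟩
    rcases hx with ⟨t, htU, rfl⟩ | ⟨v, hvV, rfl⟩
    · have ht : t ∈ sUc N M U V (Sum.inl t) := ⟨htU, Relation.ReflTransGen.refl⟩
      rw [hU0] at ht; exact ht
    · have hv : v ∈ sVc N M U V (Sum.inr v) := ⟨hvV, Relation.ReflTransGen.refl⟩
      rw [hV0] at hv; exact hv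
  · intro U' V' hsub1 hsub2 hsync
    by_cases hboth : U' = ∅ ∧ V' = ∅
    · exact Or.inl hboth
    right
    obtain ⟨a₀, hP0, hr0⟩ : ∃ a₀ : T₁ ⊕ T₂,
        Sum.elim (· ∈ U') (· ∈ V') a₀ ∧ sReach N M U V x a₀ := by
      rcases Set.eq_empty_or_nonempty U' with h | ⟨t₀, ht₀⟩
      · rcases Set.eq_empty_or_nonempty V' with h' | ⟨v₀, hv₀⟩
        · exact absurd ⟨h, h'⟩ hboth
        · exact ⟨Sum.inr v₀, hv₀, (hsub2 hv₀).2⟩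
      · exact ⟨Sum.inl t₀, ht₀, (hsub1 ht₀).2⟩
    have key : ∀ b : T₁ ⊕ T₂, sReach N M U V x b → Sum.elim (· ∈ U') (· ∈ V') b := by
      intro b hb
      have hab : sReach N M U V a₀ b := (sReach_symm N M U V hr0).trans hb
      clear hb
      induction hab with
      | refl => exact hP0
      | tail h e ih => exact sync_edge_closed N M hN hM hsync.2.2 e ih
    refine ⟨subset_antisymm hsub1 (fun t ht => key (Sum.inl t) ht.2),
      subset_antisymm hsub2 (fun v hv => key (Sum.inr v) hv.2)⟩

lemma mem_inl_union {A : Set P} {B : Set Q} {p : P} :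
    (Sum.inl p : P ⊕ Q) ∈ Sum.inl '' A ∪ Sum.inr '' B ↔ p ∈ A := by simp

lemma mem_inr_union {A : Set P} {B : Set Q} {q : Q} :
    (Sum.inr q : P ⊕ Q) ∈ Sum.inl '' A ∪ Sum.inr '' B ↔ q ∈ B := by simp

/-- Single-step compositionality, backward direction. -/
lemma step_comp (N : Net P T₁ k l) (M : Net Q T₂ l m)
    (hN : N.BoundaryInj) (hM : M.BoundaryInj)
    {X X' : Set P} {Y Y' : Set Q} {α : Set (Fin k)} {γ : Set (Fin l)} {β : Set (Fin m)}
    (h1 : N.Step X α γ X') (h2 : M.Step Y γ β Y') :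
    (N.comp M).Step (mU X Y) α β (mU X' Y') := by
  obtain ⟨U, hUMI, hUpre, hUpost, hX', hUsrc, hUtgt⟩ := h1
  obtain ⟨V, hVMI, hVpre, hVpost, hY', hVsrc, hVtgt⟩ := h2
  have hmid : N.tgtSet U = M.srcSet V := by rw [hUtgt, hVsrc]
  set W : Set {s : Set T₁ × Set T₂ // MinSync N M s.1 s.2} :=
    {s | ∃ x ∈ (Sum.inl '' U ∪ Sum.inr '' V : Set (T₁ ⊕ T₂)),
      s.val = (sUc N M U V x, sVc N M U V x)} with hWdef
  have hWU : (⋃ s ∈ W, s.val.1) = U := by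
    ext t
    simp only [Set.mem_iUnion, exists_prop]
    constructor
    · rintro ⟨s, ⟨x, hx, hval⟩, ht⟩
      rw [hval] at ht
      exact ht.1
    · intro ht
      refine ⟨⟨(sUc N M U V (Sum.inl t), sVc N M U V (Sum.inl t)),
        sComp_minSync N M hN hM hUMI hVMI hmid _ (Or.inl ⟨t, ht, rfl⟩)⟩,
        ⟨Sum.inl t, Or.inl ⟨t, ht, rfl⟩, rfl⟩, ht, Relation.ReflTransGen.refl⟩
  have hWV : (⋃ s ∈ W, s.val.2) = V := by
    ext v
    simp only [Set.mem_iUnion, exists_prop]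
    constructor
    · rintro ⟨s, ⟨x, hx, hval⟩, hv⟩
      rw [hval] at hv
      exact hv.1
    · intro hv
      refine ⟨⟨(sUc N M U V (Sum.inr v), sVc N M U V (Sum.inr v)),
        sComp_minSync N M hN hM hUMI hVMI hmid _ (Or.inr ⟨v, hv, rfl⟩)⟩,
        ⟨Sum.inr v, Or.inr ⟨v, hv, rfl⟩, rfl⟩, hv, Relation.ReflTransGen.refl⟩
  have hpreW : (N.comp M).preSet W = Sum.inl '' N.preSet U ∪ Sum.inr '' M.preSet V := by
    ext z
    constructor
    · intro hz
      obtain ⟨s, hs, hzs⟩ := mem_preSet'.1 hz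
      simp only [comp] at hzs
      rcases hzs with ⟨p, hp, rfl⟩ | ⟨q, hq, rfl⟩
      · obtain ⟨t, ht, hpt⟩ := mem_preSet'.1 hp
        exact Or.inl ⟨p, mem_preSet'.2 ⟨t, hWU ▸ Set.mem_biUnion hs ht, hpt⟩, rfl⟩
      · obtain ⟨v, hv, hqv⟩ := mem_preSet'.1 hq
        exact Or.inr ⟨q, mem_preSet'.2 ⟨v, hWV ▸ Set.mem_biUnion hs hv, hqv⟩, rfl⟩
    · rintro (⟨p, hp, rfl⟩ | ⟨q, hq, rfl⟩)
      · obtain ⟨t, ht, hpt⟩ := mem_preSet'.1 hp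
        rw [← hWU] at ht
        obtain ⟨s, hs, hts⟩ := Set.mem_iUnion₂.1 ht
        exact mem_preSet'.2 ⟨s, hs, Or.inl ⟨p, mem_preSet'.2 ⟨t, hts, hpt⟩, rfl⟩⟩
      · obtain ⟨v, hv, hqv⟩ := mem_preSet'.1 hq
        rw [← hWV] at hv
        obtain ⟨s, hs, hvs⟩ := Set.mem_iUnion₂.1 hv
        exact mem_preSet'.2 ⟨s, hs, Or.inr ⟨q, mem_preSet'.2 ⟨v, hvs, hqv⟩, rfl⟩⟩
  have hpostW : (N.comp M).postSet W = Sum.inl '' N.postSet U ∪ Sum.inr '' M.postSet V := by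
    ext z
    constructor
    · intro hz
      obtain ⟨s, hs, hzs⟩ := mem_postSet'.1 hz
      simp only [comp] at hzs
      rcases hzs with ⟨p, hp, rfl⟩ | ⟨q, hq, rfl⟩
      · obtain ⟨t, ht, hpt⟩ := mem_postSet'.1 hp
        exact Or.inl ⟨p, mem_postSet'.2 ⟨t, hWU ▸ Set.mem_biUnion hs ht, hpt⟩, rfl⟩
      · obtain ⟨v, hv, hqv⟩ := mem_postSet'.1 hq
        exact Or.inr ⟨q, mem_postSet'.2 ⟨v, hWV ▸ Set.mem_biUnion hs hv, hqv⟩, rfl⟩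
    · rintro (⟨p, hp, rfl⟩ | ⟨q, hq, rfl⟩)
      · obtain ⟨t, ht, hpt⟩ := mem_postSet'.1 hp
        rw [← hWU] at ht
        obtain ⟨s, hs, hts⟩ := Set.mem_iUnion₂.1 ht
        exact mem_postSet'.2 ⟨s, hs, Or.inl ⟨p, mem_postSet'.2 ⟨t, hts, hpt⟩, rfl⟩⟩
      · obtain ⟨v, hv, hqv⟩ := mem_postSet'.1 hq
        rw [← hWV] at hv
        obtain ⟨s, hs, hvs⟩ := Set.mem_iUnion₂.1 hv
        exact mem_postSet'.2 ⟨s, hs, Or.inr ⟨q, mem_postSet'.2 ⟨v, hvs, hqv⟩, rfl⟩⟩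
  have hsrcW : (N.comp M).srcSet W = N.srcSet U := by
    ext p
    constructor
    · intro hp
      obtain ⟨s, hs, hps⟩ := mem_srcSet'.1 hp
      obtain ⟨t, ht, hpt⟩ := mem_srcSet'.1 hps
      exact mem_srcSet'.2 ⟨t, hWU ▸ Set.mem_biUnion hs ht, hpt⟩
    · intro hp
      obtain ⟨t, ht, hpt⟩ := mem_srcSet'.1 hp
      rw [← hWU] at ht
      obtain ⟨s, hs, hts⟩ := Set.mem_iUnion₂.1 ht
      exact mem_srcSet'.2 ⟨s, hs, mem_srcSet'.2 ⟨t, hts, hpt⟩⟩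
  have htgtW : (N.comp M).tgtSet W = M.tgtSet V := by
    ext p
    constructor
    · intro hp
      obtain ⟨s, hs, hps⟩ := mem_tgtSet'.1 hp
      obtain ⟨v, hv, hpv⟩ := mem_tgtSet'.1 hps
      exact mem_tgtSet'.2 ⟨v, hWV ▸ Set.mem_biUnion hs hv, hpv⟩
    · intro hp
      obtain ⟨v, hv, hpv⟩ := mem_tgtSet'.1 hp
      rw [← hWV] at hv
      obtain ⟨s, hs, hvs⟩ := Set.mem_iUnion₂.1 hv
      exact mem_tgtSet'.2 ⟨s, hs, mem_tgtSet'.2 ⟨v, hvs, hpv⟩⟩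
  refine ⟨W, ?_, ?_, ?_, ?_, ?_, ?_⟩
  · -- MI
    rintro s hs s' hs' hne
    obtain ⟨x, hx, hval⟩ := hs
    obtain ⟨x', hx', hval'⟩ := hs'
    have hkey : ∀ z : T₁ ⊕ T₂, sReach N M U V x z → sReach N M U V x' z → False := by
      intro z h1 h2
      have hxx' : sReach N M U V x x' := h1.trans (sReach_symm N M U V h2)
      obtain ⟨e1, e2⟩ := sComp_eq N M hxx'
      exact hne (Subtype.ext (by rw [hval, hval', e1, e2]))
    rw [Set.eq_empty_iff_forall_notMem]
    rintro z ⟨hz1, hz2⟩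
    simp only [comp, hval, hval'] at hz1 hz2
    rcases z with p | q
    · have h1 : ∃ t, t ∈ sUc N M U V x ∧ p ∈ N.pre t ∪ N.post t := by
        rcases hz1 with h | h
        · obtain ⟨t, ht, hp⟩ := mem_preSet'.1 (mem_inl_union.1 h)
          exact ⟨t, ht, Or.inl hp⟩
        · obtain ⟨t, ht, hp⟩ := mem_postSet'.1 (mem_inl_union.1 h)
          exact ⟨t, ht, Or.inr hp⟩
      have h2 : ∃ t, t ∈ sUc N M U V x' ∧ p ∈ N.pre t ∪ N.post t := by
        rcases hz2 with h | h
        · obtain ⟨t, ht, hp⟩ := mem_preSet'.1 (mem_inl_union.1 h)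
          exact ⟨t, ht, Or.inl hp⟩
        · obtain ⟨t, ht, hp⟩ := mem_postSet'.1 (mem_inl_union.1 h)
          exact ⟨t, ht, Or.inr hp⟩
      obtain ⟨t, ht, hp⟩ := h1
      obtain ⟨t', ht', hp'⟩ := h2
      have htt : t ≠ t' := by
        rintro rfl
        exact hkey (Sum.inl t) ht.2 ht'.2
      exact absurd ((hUMI t ht.1 t' ht'.1 htt) ▸ Set.mem_inter hp hp')
        (Set.notMem_empty _)
    · have h1 : ∃ v, v ∈ sVc N M U V x ∧ q ∈ M.pre v ∪ M.post v := by
        rcases hz1 with h | h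
        · obtain ⟨v, hv, hq⟩ := mem_preSet'.1 (mem_inr_union.1 h)
          exact ⟨v, hv, Or.inl hq⟩
        · obtain ⟨v, hv, hq⟩ := mem_postSet'.1 (mem_inr_union.1 h)
          exact ⟨v, hv, Or.inr hq⟩
      have h2 : ∃ v, v ∈ sVc N M U V x' ∧ q ∈ M.pre v ∪ M.post v := by
        rcases hz2 with h | h
        · obtain ⟨v, hv, hq⟩ := mem_preSet'.1 (mem_inr_union.1 h)
          exact ⟨v, hv, Or.inl hq⟩
        · obtain ⟨v, hv, hq⟩ := mem_postSet'.1 (mem_inr_union.1 h)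
          exact ⟨v, hv, Or.inr hq⟩
      obtain ⟨v, hv, hq⟩ := h1
      obtain ⟨v', hv', hq'⟩ := h2
      have hvv : v ≠ v' := by
        rintro rfl
        exact hkey (Sum.inr v) hv.2 hv'.2
      exact absurd ((hVMI v hv.1 v' hv'.1 hvv) ▸ Set.mem_inter hq hq')
        (Set.notMem_empty _)
  · -- preSet ⊆
    rw [hpreW]
    rintro z (⟨p, hp, rfl⟩ | ⟨q, hq, rfl⟩)
    · exact Or.inl ⟨p, hUpre hp, rfl⟩
    · exact Or.inr ⟨q, hVpre hq, rfl⟩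
  · -- postSet ∩ = ∅
    rw [hpostW]
    rw [Set.eq_empty_iff_forall_notMem]
    rintro z ⟨h1, h2⟩
    rcases h1 with ⟨p, hp, rfl⟩ | ⟨q, hq, rfl⟩
    · rcases h2 with ⟨p', hp', h⟩ | ⟨q', hq', h⟩
      · obtain rfl : p' = p := Sum.inl.inj h
        exact absurd (hUpost ▸ Set.mem_inter hp hp') (Set.notMem_empty _)
      · exact absurd h (by simp)
    · rcases h2 with ⟨p', hp', h⟩ | ⟨q', hq', h⟩
      · exact absurd h (by simp)
      · obtain rfl : q' = q := Sum.inr.inj h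
        exact absurd (hVpost ▸ Set.mem_inter hq hq') (Set.notMem_empty _)
  · -- marking equation
    rw [hpreW, hpostW, hX', hY']
    ext z
    cases z <;> simp [mU]
  · -- src
    rw [hsrcW, hUsrc]
  · -- tgt
    rw [htgtW, hVtgt]

lemma eps_lift_left (N : Net P T₁ k l) (M : Net Q T₂ l m)
    (hN : N.BoundaryInj) (hM : M.BoundaryInj) {X X' : Set P} (Y : Set Q)
    (h : Relation.ReflTransGen N.EpsStep X X') :
    Relation.ReflTransGen (N.comp M).EpsStep (mU X Y) (mU X' Y) := by
  induction h with
  | refl => exact Relation.ReflTransGen.refl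
  | tail _ e ih => exact ih.tail (step_comp N M hN hM e (M.idle Y))

lemma eps_lift_right (N : Net P T₁ k l) (M : Net Q T₂ l m)
    (hN : N.BoundaryInj) (hM : M.BoundaryInj) (X : Set P) {Y Y' : Set Q}
    (h : Relation.ReflTransGen M.EpsStep Y Y') :
    Relation.ReflTransGen (N.comp M).EpsStep (mU X Y) (mU X Y') := by
  induction h with
  | refl => exact Relation.ReflTransGen.refl
  | tail _ e ih => exact ih.tail (step_comp N M hN hM (N.idle X) e)

end Aux

end Net

open Net in
/-- weak compositionality, backward direction. -/
theorem weak_compositionality_backward {P Q T₁ T₂ : Type} {k l m : ℕ}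
    (N : Net P T₁ k l) (M : Net Q T₂ l m)
    (hN : N.BoundaryInj) (hM : M.BoundaryInj)
    (X X' : Set P) (Y Y' : Set Q)
    (α : Set (Fin k)) (β : Set (Fin m)) (γ : Set (Fin l))
    (hNw : N.Weak X α γ X') (hMw : M.Weak Y γ β Y') :
    (N.comp M).Weak (mU X Y) α β (mU X' Y') := by
  obtain ⟨X₁, X₂, ha, hb, hc⟩ := hNw
  obtain ⟨Y₁, Y₂, ha', hb', hc'⟩ := hMw
  exact ⟨mU X₁ Y₁, mU X₂ Y₂,
    (eps_lift_left N M hN hM Y ha).trans (eps_lift_right N M hN hM X₁ ha'),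
    step_comp N M hN hM hb hb',
    (eps_lift_left N M hN hM Y₂ hc).trans (eps_lift_right N M hN hM X' hc')⟩
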